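/- If M is a point in the plane of a square ABCD with integer side length such that the distances from M to all four vertices are positive integers, then no line through a vertex of the square and through M makes an angle with a side of the square that is a rational multiple of π, unless that angle is 0, π/2 or π (which cases are themselves impossible). Concretely: the angle ∠MDA cannot equal π/3 or 2π/3. -/

import Mathlib

open EuclideanGeometry

lemma no3' (c : ℤ) (k : ℕ) (hk : 0 < k) : c^2 ≠ 3 * (k:ℤ)^2 := by
  intro h
  have hk' : ((k:ℝ)) ≠ 0 := by positivity
  have hcast : ((c:ℝ))^2 = 3 * (k:ℝ)^2 := by exact_mod_cast h
  have hR : ((c:ℝ)/k)^2 = 3 := by field_simp; linarith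
  have h3 : Irrational (Real.sqrt 3) := by
    simpa using (Nat.prime_three).irrational_sqrt
  have hs : Real.sqrt 3 = |(c:ℝ)/k| := by rw [← hR, Real.sqrt_sq_eq_abs]
  rw [hs] at h3
  have : |(c:ℝ)/(k:ℝ)| = ((|(c:ℚ)/(k:ℚ)| : ℚ) : ℝ) := by push_cast; ring
  rw [this] at h3
  exact (Rat.not_irrational _) h3

theorem steinhaus_square_vertex_angle
    (a : ℕ) (ha : 0 < a) (M : EuclideanSpace ℝ (Fin 2))
    (A B C D : EuclideanSpace ℝ (Fin 2))
    (hA : A = !₂[0, 0]) (hB : B = !₂[0, (a : ℝ)])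
    (hC : C = !₂[(a : ℝ), (a : ℝ)]) (hD : D = !₂[(a : ℝ), 0])
    (hMA : ∃ n : ℕ, 0 < n ∧ dist M A = n)
    (hMB : ∃ n : ℕ, 0 < n ∧ dist M B = n)
    (hMC : ∃ n : ℕ, 0 < n ∧ dist M C = n)
    (hMD : ∃ n : ℕ, 0 < n ∧ dist M D = n) :
    ∠ M D A ≠ Real.pi / 3 ∧ ∠ M D A ≠ 2 * Real.pi / 3 := by
  obtain ⟨n, hn, hdA⟩ := hMA
  obtain ⟨p, hp, hdB⟩ := hMB
  obtain ⟨m, hm, hdD⟩ := hMD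
  have ha' : (0:ℝ) < a := by exact_mod_cast ha
  have sqd : ∀ (P : EuclideanSpace ℝ (Fin 2)) (k : ℕ), dist M P = k →
      (M 0 - P 0)^2 + (M 1 - P 1)^2 = (k:ℝ)^2 := by
    intro P k h
    have h2 : dist M P ^ 2 = (k:ℝ)^2 := by rw [h]
    rw [EuclideanSpace.dist_eq, Real.sq_sqrt (by positivity)] at h2
    simpa [Fin.sum_univ_two, Real.dist_eq, sq_abs] using h2
  have h1 := sqd A n hdA
  have h2 := sqd B p hdB
  have h3 := sqd D m hdD
  rw [hA] at h1
  rw [hB] at h2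
  rw [hD] at h3
  simp only [Matrix.cons_val_zero, Matrix.cons_val_one, Matrix.head_cons, sub_zero] at h1 h2 h3
  have hAD : dist A D = (a:ℝ) := by
    rw [hA, hD, EuclideanSpace.dist_eq]
    simp [Fin.sum_univ_two, Real.dist_eq, abs_of_nonneg ha'.le]
  have main : ∀ ε : ℝ, ε^2 = 1 → (n:ℝ)^2 = (m:ℝ)^2 + (a:ℝ)^2 - ((m:ℝ)*(a:ℝ))*ε → False := by
    intro ε hε heq
    have hX : (a:ℝ) * (2*(M 0 - a) + m*ε) = 0 := by linear_combination h1 - h3 + heq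
    have hX2 : 2*(M 0 - (a:ℝ)) + m*ε = 0 := by
      rcases mul_eq_zero.1 hX with h | h
      · exact absurd h (by positivity)
      · exact h
    have hx : (M 0 - (a:ℝ))^2 = (m:ℝ)^2/4 := by
      linear_combination ((2*(M 0 - (a:ℝ)) - m*ε)/4) * hX2 + ((m:ℝ)^2/4) * hε
    have hy : (M 1)^2 = 3*(m:ℝ)^2/4 := by linarith [h3, hx]
    have hc : ((n:ℝ)^2 - (p:ℝ)^2 + (a:ℝ)^2) = 2*(a:ℝ)*(M 1) := by linear_combination h2 - h1
    have hfin : ((n:ℤ)^2 - (p:ℤ)^2 + (a:ℤ)^2)^2 = 3*((a*m : ℕ):ℤ)^2 := by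
      have hR : ((n:ℝ)^2 - (p:ℝ)^2 + (a:ℝ)^2)^2 = 3*(((a*m:ℕ)):ℝ)^2 := by
        push_cast
        calc ((n:ℝ)^2 - (p:ℝ)^2 + (a:ℝ)^2)^2 = 4*(a:ℝ)^2*(M 1)^2 := by rw [hc]; ring
        _ = 3*((a:ℝ)*(m:ℝ))^2 := by rw [hy]; ring
      exact_mod_cast hR
    exact no3' _ (a*m) (by positivity) hfin
  constructor
  · intro h
    have hcos := EuclideanGeometry.law_cos M D A
    rw [h, Real.cos_pi_div_three, hdA, hdD, hAD] at hcos
    exact main 1 (by norm_num) (by linarith [hcos])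
  · intro h
    have hcos := EuclideanGeometry.law_cos M D A
    rw [h, show 2*Real.pi/3 = Real.pi - Real.pi/3 by ring, Real.cos_pi_sub,
      Real.cos_pi_div_three, hdA, hdD, hAD] at hcos
    exact main (-1) (by norm_num) (by linarith [hcos])
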